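/- Let G be a finite (q+1)-regular graph with q ≥ 2. The kernel of ∇ : ℂ^{B_{k−1}} → ℂ^{B_k}, defined by (∇K)(x_0;x_k) = K(x_1;x_k) − K(x_0;x_{k−1}), consists exactly of the constant functions on B_{k−1}, provided G is connected. Consequently, the range of ∇* : ℂ^{B_k} → ℂ^{B_{k−1}} equals the set of functions K on B_{k−1} with Σ_{(x_0;x_{k−1})∈B_{k−1}} K(x_0;x_{k−1}) = 0. -/

import Mathlib

open Finset

variable {V : Type*}

/-- A non-backtracking walk of length `n`: consecutive vertices are adjacent and
`p (i+2) ≠ p i`. -/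
def IsNBWalk (G : SimpleGraph V) {n : ℕ} (p : Fin (n + 1) → V) : Prop :=
  (∀ i j : Fin (n + 1), (j : ℕ) = (i : ℕ) + 1 → G.Adj (p i) (p j)) ∧
  (∀ i j : Fin (n + 1), (j : ℕ) = (i : ℕ) + 2 → p j ≠ p i)

instance (G : SimpleGraph V) [DecidableEq V] [DecidableRel G.Adj] (n : ℕ) :
    DecidablePred (IsNBWalk G (n := n)) := fun _ => by
  unfold IsNBWalk; infer_instance

/-- (∇K)(x₀;x_{n+1}) = K(x₁;x_{n+1}) − K(x₀;x_n). -/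
noncomputable def gradK {n : ℕ} (K : (Fin (n + 1) → V) → ℂ) : (Fin (n + 2) → V) → ℂ :=
  fun p => K (fun i => p i.succ) - K (fun i => p i.castSucc)

/-- The adjoint ∇*: (∇*K)(x₀;x_n) = Σ_{x₋₁ ∈ N(x₀)\{x₁}} K(x₋₁;x_n)
− Σ_{x_{n+1} ∈ N(x_n)\{x_{n−1}}} K(x₀;x_{n+1}). -/
noncomputable def gradStarK [DecidableEq V] (G : SimpleGraph V)
    [∀ v : V, Fintype (G.neighborSet v)]
    {n : ℕ} (K : (Fin (n + 2) → V) → ℂ) : (Fin (n + 1) → V) → ℂ :=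
  fun p =>
    (∑ y ∈ G.neighborFinset (p 0) \ {p 1}, K (Fin.cons y p))
    - ∑ y ∈ G.neighborFinset (p (Fin.last n)) \ {p ⟨n - 1, Nat.sub_lt_succ n 1⟩},
        K (Fin.snoc p y)


set_option linter.unusedSectionVars false

section A
variable (G : SimpleGraph V)

lemma isNBWalk_iff {n : ℕ} (p : Fin (n+1) → V) :
    IsNBWalk G p ↔
      (∀ i : ℕ, (h : i + 1 < n + 1) → G.Adj (p ⟨i, by omega⟩) (p ⟨i+1, h⟩)) ∧
      (∀ i : ℕ, (h : i + 2 < n + 1) → p ⟨i+2, h⟩ ≠ p ⟨i, by omega⟩) := by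
  constructor
  · rintro ⟨h1, h2⟩
    exact ⟨fun i h => h1 ⟨i, by omega⟩ ⟨i+1, h⟩ rfl,
           fun i h => h2 ⟨i, by omega⟩ ⟨i+2, h⟩ rfl⟩
  · rintro ⟨h1, h2⟩
    constructor
    · rintro ⟨i, hi⟩ ⟨k, hk⟩ (hik : k = i + 1)
      subst hik; exact h1 i hk
    · rintro ⟨i, hi⟩ ⟨k, hk⟩ (hik : k = i + 2)
      subst hik; exact h2 i hk

lemma snoc_mk_lt {n : ℕ} (p : Fin (n+1) → V) (y : V) {i : ℕ} (h : i < n+1) (h2 : i < n+2) :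
    (Fin.snoc p y : Fin (n+2) → V) ⟨i, h2⟩ = p ⟨i, h⟩ := by
  have : (⟨i, h2⟩ : Fin (n+2)) = Fin.castSucc ⟨i, h⟩ := rfl
  rw [this, Fin.snoc_castSucc]

lemma snoc_mk_last {n : ℕ} (p : Fin (n+1) → V) (y : V) (h : n+1 < n+2) :
    (Fin.snoc p y : Fin (n+2) → V) ⟨n+1, h⟩ = y := by
  have : (⟨n+1, h⟩ : Fin (n+2)) = Fin.last (n+1) := rfl
  rw [this, Fin.snoc_last]

lemma cons_mk_succ {n : ℕ} (p : Fin (n+1) → V) (y : V) {i : ℕ} (h : i < n+1) (h2 : i+1 < n+2) :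
    (Fin.cons y p : Fin (n+2) → V) ⟨i+1, h2⟩ = p ⟨i, h⟩ := by
  have : (⟨i+1, h2⟩ : Fin (n+2)) = Fin.succ ⟨i, h⟩ := rfl
  rw [this, Fin.cons_succ]

lemma cons_mk_zero {n : ℕ} (p : Fin (n+1) → V) (y : V) (h : 0 < n+2) :
    (Fin.cons y p : Fin (n+2) → V) ⟨0, h⟩ = y := by
  have : (⟨0, h⟩ : Fin (n+2)) = 0 := rfl
  rw [this, Fin.cons_zero]

lemma nb_tail {n : ℕ} {p : Fin (n+2) → V} (h : IsNBWalk G p) :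
    IsNBWalk G (fun i : Fin (n+1) => p i.succ) := by
  rw [isNBWalk_iff] at h ⊢
  obtain ⟨h1, h2⟩ := h
  constructor
  · intro i hi
    have := h1 (i+1) (by omega)
    simpa [Fin.succ_mk] using this
  · intro i hi
    have := h2 (i+1) (by omega)
    simpa [Fin.succ_mk] using this

lemma nb_head {n : ℕ} {p : Fin (n+2) → V} (h : IsNBWalk G p) :
    IsNBWalk G (fun i : Fin (n+1) => p i.castSucc) := by
  rw [isNBWalk_iff] at h ⊢
  obtain ⟨h1, h2⟩ := h
  constructor
  · intro i hi
    have := h1 i (by omega)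
    simpa [Fin.castSucc_mk] using this
  · intro i hi
    have := h2 i (by omega)
    simpa [Fin.castSucc_mk] using this

lemma nb_snoc {n : ℕ} {p : Fin (n+1) → V} (h : IsNBWalk G p) {y : V}
    (hadj : G.Adj (p (Fin.last n)) y) (hne : y ≠ p ⟨n - 1, Nat.sub_lt_succ n 1⟩) :
    IsNBWalk G (Fin.snoc p y) := by
  rw [isNBWalk_iff] at h ⊢
  obtain ⟨h1, h2⟩ := h
  constructor
  · intro i hi
    rcases Nat.lt_or_ge (i+1) (n+1) with hlt | hge
    · rw [snoc_mk_lt p y (i := i) (by omega), snoc_mk_lt p y (i := i+1) hlt]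
      exact h1 i hlt
    · have e1 : (⟨i+1, hi⟩ : Fin (n+2)) = ⟨n+1, by omega⟩ := by
        apply Fin.ext; show i + 1 = n + 1; omega
      rw [e1, snoc_mk_last, snoc_mk_lt p y (i := i) (by omega)]
      have e3 : p ⟨i, by omega⟩ = p (Fin.last n) := congrArg p (Fin.ext (show i = n by omega))
      rw [e3]; exact hadj
  · intro i hi
    rcases Nat.lt_or_ge (i+2) (n+1) with hlt | hge
    · rw [snoc_mk_lt p y (i := i+2) hlt, snoc_mk_lt p y (i := i) (by omega)]
      exact h2 i hlt
    · have e1 : (⟨i+2, hi⟩ : Fin (n+2)) = ⟨n+1, by omega⟩ := by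
        apply Fin.ext; show i + 2 = n + 1; omega
      rw [e1, snoc_mk_last, snoc_mk_lt p y (i := i) (by omega)]
      have e3 : p ⟨i, by omega⟩ = p ⟨n - 1, Nat.sub_lt_succ n 1⟩ :=
        congrArg p (Fin.ext (show i = n - 1 by omega))
      rw [e3]
      exact hne

lemma nb_cons {n : ℕ} {p : Fin (n+1) → V} (h : IsNBWalk G p) {y : V}
    (hadj : G.Adj y (p 0)) (hne : ∀ h1 : 1 < n + 1, y ≠ p ⟨1, h1⟩) :
    IsNBWalk G (Fin.cons y p) := by
  rw [isNBWalk_iff] at h ⊢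
  obtain ⟨h1, h2⟩ := h
  constructor
  · intro i hi
    rcases Nat.eq_zero_or_pos i with rfl | hpos
    · rw [cons_mk_zero p y, cons_mk_succ p y (i := 0) (by omega)]
      have : p ⟨0, by omega⟩ = p 0 := congrArg p (Fin.ext (by simp))
      rw [this]; exact hadj
    · obtain ⟨k, rfl⟩ := Nat.exists_eq_succ_of_ne_zero (by omega : i ≠ 0)
      have e1 : (⟨k+1+1, hi⟩ : Fin (n+2)) = ⟨(k+1)+1, by omega⟩ := rfl
      rw [e1, cons_mk_succ p y (i := k) (by omega), cons_mk_succ p y (i := k+1) (by omega)]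
      exact h1 k (by omega)
  · intro i hi
    rcases Nat.eq_zero_or_pos i with rfl | hpos
    · have e1 : (⟨0+2, hi⟩ : Fin (n+2)) = ⟨1+1, by omega⟩ := rfl
      rw [cons_mk_zero p y, e1, cons_mk_succ p y (i := 1) (by omega)]
      exact (hne (by omega)).symm
    · obtain ⟨k, rfl⟩ := Nat.exists_eq_succ_of_ne_zero (by omega : i ≠ 0)
      have e1 : (⟨k+1+2, hi⟩ : Fin (n+2)) = ⟨(k+2)+1, by omega⟩ := by
        apply Fin.ext; show k+1+2 = k+2+1; omega
      rw [e1, cons_mk_succ p y (i := k) (by omega), cons_mk_succ p y (i := k+2) (by omega)]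
      exact h2 k (by omega)

lemma nb_all_fin1 (p : Fin 1 → V) : IsNBWalk G p := by
  constructor
  · rintro ⟨i, hi⟩ ⟨k, hk⟩ h
    omega
  · rintro ⟨i, hi⟩ ⟨k, hk⟩ h
    omega

lemma nb_pair {a b : V} (h : G.Adj a b) : IsNBWalk G (fun i : Fin 2 => if i = 0 then a else b) := by
  constructor
  · rintro ⟨i, hi⟩ ⟨k, hk⟩ (hik : k = i + 1)
    have hi0 : i = 0 ∧ k = 1 := by omega
    obtain ⟨rfl, rfl⟩ := hi0
    simpa using h
  · rintro ⟨i, hi⟩ ⟨k, hk⟩ (hik : k = i + 2)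
    omega

end A
section B
variable [Fintype V] [DecidableEq V] (G : SimpleGraph V) [DecidableRel G.Adj]

lemma card_nbr {q : ℕ} (hreg : G.IsRegularOfDegree (q + 1)) (v : V) :
    (G.neighborFinset v).card = q + 1 := hreg v

lemma exists_ne_nbr {q : ℕ} (hq : 2 ≤ q) (hreg : G.IsRegularOfDegree (q + 1)) (v a : V) :
    ∃ b, G.Adj v b ∧ b ≠ a := by
  have hcard : 1 < (G.neighborFinset v).card := by
    rw [card_nbr G hreg v]; omega
  obtain ⟨b, hb, hba⟩ := Finset.exists_mem_ne hcard a
  exact ⟨b, (SimpleGraph.mem_neighborFinset G v b).mp hb, hba⟩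

lemma exists_ne_nbr2 {q : ℕ} (hq : 2 ≤ q) (hreg : G.IsRegularOfDegree (q + 1)) (v a b : V) :
    ∃ c, G.Adj v c ∧ c ≠ a ∧ c ≠ b := by
  by_contra hcon
  push_neg at hcon
  have hsub : G.neighborFinset v ⊆ {a, b} := by
    intro x hx
    rcases eq_or_ne x a with rfl | hxa
    · simp
    rcases eq_or_ne x b with rfl | hxb
    · simp
    exact absurd (hcon x ((SimpleGraph.mem_neighborFinset G v x).mp hx) hxa) hxb
  have := Finset.card_le_card hsub
  rw [card_nbr G hreg v] at this
  have : ({a, b} : Finset V).card ≤ 2 := Finset.card_insert_le _ _ |>.trans (by simp)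
  omega

lemma exists_ray {q : ℕ} (hq : 2 ≤ q) (hreg : G.IsRegularOfDegree (q + 1)) (a b : V)
    (hab : G.Adj a b) :
    ∃ c : ℕ → V, c 0 = a ∧ c 1 = b ∧ (∀ i, G.Adj (c i) (c (i+1))) ∧ (∀ i, c (i+2) ≠ c i) := by
  classical
  set step : {p : V × V // G.Adj p.1 p.2} → {p : V × V // G.Adj p.1 p.2} := fun e =>
    ⟨(e.val.2, (exists_ne_nbr G hq hreg e.val.2 e.val.1).choose),
      (exists_ne_nbr G hq hreg e.val.2 e.val.1).choose_spec.1⟩ with hstep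
  set d : ℕ → {p : V × V // G.Adj p.1 p.2} := fun k => step^[k] ⟨(a, b), hab⟩ with hd
  have hdsucc : ∀ k, d (k+1) = step (d k) := by
    intro k
    simp only [hd, Function.iterate_succ_apply']
  refine ⟨fun k => (d k).val.1, rfl, ?_, ?_, ?_⟩
  · show (d (0+1)).val.1 = b
    rw [hdsucc 0]
    rfl
  · intro i
    show G.Adj (d i).val.1 (d (i+1)).val.1
    rw [hdsucc i]
    exact (d i).property
  · intro i
    show (d (i+1+1)).val.1 ≠ (d i).val.1
    rw [hdsucc (i+1), hdsucc i]
    exact (exists_ne_nbr G hq hreg (d i).val.2 (d i).val.1).choose_spec.2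

lemma exists_nb_last_edge {q : ℕ} (hq : 2 ≤ q) (hreg : G.IsRegularOfDegree (q + 1)) (a b : V)
    (hab : G.Adj a b) (m : ℕ) :
    ∃ r : Fin (m+2) → V, IsNBWalk G r ∧ r ⟨m, by omega⟩ = a ∧ r ⟨m+1, by omega⟩ = b := by
  classical
  induction m with
  | zero =>
    refine ⟨fun i => if i = 0 then a else b, nb_pair G hab, ?_, ?_⟩
    · simp [Fin.ext_iff]
    · simp [Fin.ext_iff]
  | succ m ih =>
    obtain ⟨r, hr, hra, hrb⟩ := ih
    obtain ⟨x, hx, hxne⟩ := exists_ne_nbr G hq hreg (r 0) (r ⟨1, by omega⟩)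
    refine ⟨Fin.cons x r, nb_cons G hr (G.adj_symm hx) (fun h1 => hxne), ?_, ?_⟩
    · rw [cons_mk_succ r x (i := m) (by omega)]
      exact hra
    · rw [cons_mk_succ r x (i := m+1) (by omega)]
      exact hrb

lemma shift_along_ray {n : ℕ} (K' : (Fin (n+2) → V) → ℂ)
    (hK : ∀ p : Fin (n+3) → V, IsNBWalk G p → gradK K' p = 0)
    (c : ℕ → V) (hc1 : ∀ i, G.Adj (c i) (c (i+1))) (hc2 : ∀ i, c (i+2) ≠ c i) :
    ∀ s : ℕ, s ≤ n → ∀ r : Fin (n+2) → V, IsNBWalk G r →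
      (∀ i : Fin (n+2), s ≤ i.val → r i = c (i.val - s)) →
      K' r = K' (fun i => c i.val) := by
  intro s
  induction s with
  | zero =>
    intro _ r _ hmatch
    congr 1
    funext i
    simpa using hmatch i (by omega)
  | succ s ih =>
    intro hs r hr hmatch
    set y : V := c (n+1-s) with hy
    have hrlast : r (Fin.last (n+1)) = c (n - s) := by
      have := hmatch (Fin.last (n+1)) (by simp [Fin.last]; omega)
      simpa [Fin.last, show n + 1 - (s+1) = n - s by omega] using this
    have hadj : G.Adj (r (Fin.last (n+1))) y := by
      rw [hrlast, hy, show n + 1 - s = (n - s) + 1 by omega]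
      exact hc1 (n - s)
    have hrsec : r ⟨n, by omega⟩ = c (n - s - 1) := by
      have := hmatch ⟨n, by omega⟩ (by simp; omega)
      simpa [show n - (s+1) = n - s - 1 by omega] using this
    have hne : y ≠ r ⟨(n+1) - 1, Nat.sub_lt_succ (n+1) 1⟩ := by
      have e : r ⟨(n+1)-1, Nat.sub_lt_succ (n+1) 1⟩ = r ⟨n, by omega⟩ := rfl
      rw [e, hrsec, hy, show n + 1 - s = (n - s - 1) + 2 by omega]
      exact hc2 (n - s - 1)
    have hsnoc : IsNBWalk G (Fin.snoc r y : Fin (n+3) → V) := nb_snoc G hr hadj hne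
    set r' : Fin (n+2) → V := fun i => (Fin.snoc r y : Fin (n+3) → V) i.succ with hr'
    have hr'nb : IsNBWalk G r' := nb_tail G hsnoc
    have hKr : K' r = K' r' := by
      have h0 := hK (Fin.snoc r y) hsnoc
      unfold gradK at h0
      have hhead : (fun i : Fin (n+2) => (Fin.snoc r y : Fin (n+3) → V) i.castSucc) = r := by
        funext i; simp
      rw [hhead] at h0
      have h3 := sub_eq_zero.mp h0
      rw [hr']
      exact h3.symm
    rw [hKr]
    apply ih (by omega) r' hr'nb
    intro i hi
    rcases Nat.lt_or_ge (i.val + 1) (n+2) with hlt | hge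
    · have e : r' i = r ⟨i.val + 1, hlt⟩ := by
        show (Fin.snoc r y : Fin (n+3) → V) i.succ = _
        have h2 : i.succ = (⟨i.val + 1, by omega⟩ : Fin (n+3)) := rfl
        rw [h2, snoc_mk_lt r y hlt]
      rw [e, hmatch ⟨i.val+1, hlt⟩ (by show s + 1 ≤ i.val + 1; omega)]
      congr 1
      show i.val + 1 - (s+1) = i.val - s
      omega
    · have hival : i.val = n + 1 := by omega
      have e : r' i = y := by
        show (Fin.snoc r y : Fin (n+3) → V) i.succ = y
        have h2 : i.succ = (⟨n+2, by omega⟩ : Fin (n+3)) := by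
          apply Fin.ext; show i.val + 1 = n + 2; omega
        rw [h2, snoc_mk_last]
      rw [e, hy]
      congr 1
      omega

lemma eq_of_same_last_edge {q : ℕ} (hq : 2 ≤ q) (hreg : G.IsRegularOfDegree (q + 1))
    {n : ℕ} (K' : (Fin (n+2) → V) → ℂ)
    (hK : ∀ p : Fin (n+3) → V, IsNBWalk G p → gradK K' p = 0)
    (r s : Fin (n+2) → V) (hr : IsNBWalk G r) (hs : IsNBWalk G s)
    (h1 : r ⟨n, by omega⟩ = s ⟨n, by omega⟩) (h2 : r ⟨n+1, by omega⟩ = s ⟨n+1, by omega⟩) :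
    K' r = K' s := by
  have hadj : G.Adj (r ⟨n, by omega⟩) (r ⟨n+1, by omega⟩) :=
    ((isNBWalk_iff G r).mp hr).1 n (by omega)
  obtain ⟨c, hc0, hc1', hcadj, hcnb⟩ := exists_ray G hq hreg _ _ hadj
  have key : ∀ t : Fin (n+2) → V, IsNBWalk G t → t ⟨n, by omega⟩ = r ⟨n, by omega⟩ →
      t ⟨n+1, by omega⟩ = r ⟨n+1, by omega⟩ → K' t = K' (fun i => c i.val) := by
    intro t ht hta htb
    apply shift_along_ray G K' hK c hcadj hcnb n (le_refl n) t ht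
    intro i hi
    rcases Nat.lt_or_ge i.val (n+1) with hlt | hge
    · have : i.val = n := by omega
      have e : i = (⟨n, by omega⟩ : Fin (n+2)) := Fin.ext this
      rw [e, hta, show (n : ℕ) - n = 0 by omega, hc0]
    · have : i.val = n + 1 := by omega
      have e : i = (⟨n+1, by omega⟩ : Fin (n+2)) := Fin.ext this
      rw [e, htb, show (n + 1 : ℕ) - n = 1 by omega, hc1']
  rw [key r hr rfl rfl, key s hs h1.symm h2.symm]

end B
section C

lemma card_filter_nat {α : Type*} (s : Finset α) (p : α → Prop) [DecidablePred p] :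
    (s.filter p).card = ∑ a ∈ s, if p a then 1 else 0 := by
  simp [Finset.sum_boole]

lemma back_reach {α : Type*} [Fintype α] (R : α → α → Prop) [DecidableRel R]
    (q : ℕ) (hq : 1 ≤ q)
    (hout : ∀ x : α, ((Finset.univ : Finset α).filter (fun y => R x y)).card = q)
    (hin : ∀ y : α, ((Finset.univ : Finset α).filter (fun x => R x y)).card = q)
    {e e' : α} (h : R e e') : Relation.ReflTransGen R e' e := by
  classical
  by_contra hcon
  set S : Finset α := Finset.univ.filter (fun x => Relation.ReflTransGen R e' x) with hS
  have hmemS : ∀ x, x ∈ S ↔ Relation.ReflTransGen R e' x := by intro x; simp [hS]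
  have hclosed : ∀ x ∈ S, ∀ y, R x y → y ∈ S :=
    fun x hx y hxy => (hmemS y).mpr (((hmemS x).mp hx).tail hxy)
  have he' : e' ∈ S := (hmemS e').mpr Relation.ReflTransGen.refl
  have heS : e ∉ S := fun hc => hcon ((hmemS e).mp hc)
  have hfilter_eq : ∀ x ∈ S, (S.filter (fun y => R x y)) = (Finset.univ.filter (fun y => R x y)) := by
    intro x hx
    apply Finset.Subset.antisymm
    · exact Finset.filter_subset_filter _ (Finset.subset_univ S)
    · intro y hy
      rw [Finset.mem_filter] at hy ⊢
      exact ⟨hclosed x hx y hy.2, hy.2⟩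
  have hsum1 : ∑ x ∈ S, (S.filter (fun y => R x y)).card = q * S.card := by
    rw [Finset.sum_congr rfl (fun x hx => by rw [hfilter_eq x hx, hout x])]
    simp [mul_comm]
  have hswap : ∑ x ∈ S, (S.filter (fun y => R x y)).card
      = ∑ y ∈ S, (S.filter (fun x => R x y)).card := by
    simp only [card_filter_nat]
    exact Finset.sum_comm
  have hle : ∀ y ∈ S, (S.filter (fun x => R x y)).card ≤ q := by
    intro y _
    rw [← hin y]
    exact Finset.card_le_card (Finset.filter_subset_filter _ (Finset.subset_univ S))
  have hlt : (S.filter (fun x => R x e')).card < q := by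
    have hsub : S.filter (fun x => R x e') ⊆ (Finset.univ.filter (fun x => R x e')).erase e := by
      intro x hx
      rw [Finset.mem_filter] at hx
      refine Finset.mem_erase.mpr ⟨?_, by simp [hx.2]⟩
      rintro rfl; exact heS hx.1
    have h2 := Finset.card_le_card hsub
    rw [Finset.card_erase_of_mem (by simp [h]), hin e'] at h2
    omega
  have hstrict : ∑ y ∈ S, (S.filter (fun x => R x y)).card < q * S.card := by
    calc ∑ y ∈ S, (S.filter (fun x => R x y)).card < ∑ _y ∈ S, q :=
          Finset.sum_lt_sum (fun i hi => hle i hi) ⟨e', he', hlt⟩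
    _ = q * S.card := by simp [mul_comm]
  rw [hswap] at hsum1
  omega

end C

section D
variable [Fintype V] [DecidableEq V] (G : SimpleGraph V) [DecidableRel G.Adj]

lemma shift_once {n : ℕ} (K' : (Fin (n+2) → V) → ℂ)
    (hK : ∀ p : Fin (n+3) → V, IsNBWalk G p → gradK K' p = 0)
    (r : Fin (n+2) → V) (hr : IsNBWalk G r) (y : V)
    (hadj : G.Adj (r (Fin.last (n+1))) y)
    (hne : y ≠ r ⟨(n+1) - 1, Nat.sub_lt_succ (n+1) 1⟩) :
    K' r = K' (fun i : Fin (n+2) => (Fin.snoc r y : Fin (n+3) → V) i.succ)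
      ∧ IsNBWalk G (fun i : Fin (n+2) => (Fin.snoc r y : Fin (n+3) → V) i.succ) := by
  have hsnoc : IsNBWalk G (Fin.snoc r y : Fin (n+3) → V) := nb_snoc G hr hadj hne
  refine ⟨?_, nb_tail G hsnoc⟩
  have h0 := hK (Fin.snoc r y) hsnoc
  unfold gradK at h0
  have hhead : (fun i : Fin (n+2) => (Fin.snoc r y : Fin (n+3) → V) i.castSucc) = r := by
    funext i; simp
  rw [hhead] at h0
  exact (sub_eq_zero.mp h0).symm

lemma part1_pos {q : ℕ} (hq : 2 ≤ q) (hconn : G.Connected) (hreg : G.IsRegularOfDegree (q + 1))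
    (n : ℕ) (K' : (Fin (n+2) → V) → ℂ)
    (hK : ∀ p : Fin (n+3) → V, IsNBWalk G p → gradK K' p = 0) :
    ∃ c : ℂ, ∀ r : Fin (n+2) → V, IsNBWalk G r → K' r = c := by
  classical
  set Ed := {e : V × V // G.Adj e.1 e.2} with hEd
  set R : Ed → Ed → Prop := fun e e' => e'.val.1 = e.val.2 ∧ e'.val.2 ≠ e.val.1 with hR
  -- out degrees
  have hout : ∀ x : Ed, ((Finset.univ : Finset Ed).filter (fun y => R x y)).card = q := by
    intro x
    have hbij : ((Finset.univ : Finset Ed).filter (fun y => R x y)).card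
        = (G.neighborFinset x.val.2 \ {x.val.1}).card := by
      refine Finset.card_bij' (fun y _ => y.val.2)
        (fun c hc => ⟨(x.val.2, c), (G.mem_neighborFinset _ _).mp (Finset.mem_sdiff.mp hc).1⟩)
        ?_ ?_ ?_ ?_
      · intro y hy
        obtain ⟨-, h1, h2⟩ := Finset.mem_filter.mp hy
        refine Finset.mem_sdiff.mpr ⟨(G.mem_neighborFinset _ _).mpr ?_, by simp [h2]⟩
        show G.Adj x.val.2 y.val.2
        rw [← h1]; exact y.property
      · intro c hc
        refine Finset.mem_filter.mpr ⟨Finset.mem_univ _, rfl, ?_⟩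
        have := (Finset.mem_sdiff.mp hc).2
        simpa using this
      · intro y hy
        obtain ⟨-, h1, h2⟩ := Finset.mem_filter.mp hy
        exact Subtype.ext (Prod.ext h1.symm rfl)
      · intro c hc
        rfl
    rw [hbij, Finset.card_sdiff_of_subset (by
        rw [Finset.singleton_subset_iff, SimpleGraph.mem_neighborFinset]
        exact G.adj_symm x.property), card_nbr G hreg, Finset.card_singleton]
    omega
  have hin : ∀ y : Ed, ((Finset.univ : Finset Ed).filter (fun x => R x y)).card = q := by
    intro y
    have hbij : ((Finset.univ : Finset Ed).filter (fun x => R x y)).card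
        = (G.neighborFinset y.val.1 \ {y.val.2}).card := by
      refine Finset.card_bij' (fun x _ => x.val.1)
        (fun c hc => ⟨(c, y.val.1), G.adj_symm ((G.mem_neighborFinset _ _).mp (Finset.mem_sdiff.mp hc).1)⟩)
        ?_ ?_ ?_ ?_
      · intro x hx
        obtain ⟨-, h1, h2⟩ := Finset.mem_filter.mp hx
        refine Finset.mem_sdiff.mpr ⟨(G.mem_neighborFinset _ _).mpr ?_, by simp [Ne.symm h2]⟩
        show G.Adj y.val.1 x.val.1
        rw [h1]; exact G.adj_symm x.property
      · intro c hc
        refine Finset.mem_filter.mpr ⟨Finset.mem_univ _, rfl, ?_⟩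
        have := (Finset.mem_sdiff.mp hc).2
        simp at this
        exact Ne.symm this
      · intro x hx
        obtain ⟨-, h1, h2⟩ := Finset.mem_filter.mp hx
        exact Subtype.ext (Prod.ext rfl h1)
      · intro c hc
        rfl
    rw [hbij, Finset.card_sdiff_of_subset (by
        rw [Finset.singleton_subset_iff, SimpleGraph.mem_neighborFinset]
        exact y.property), card_nbr G hreg, Finset.card_singleton]
    omega
  -- f on directed edges
  set f : Ed → ℂ := fun e =>
    K' (exists_nb_last_edge G hq hreg e.val.1 e.val.2 e.property n).choose with hf
  have f_spec : ∀ (e : Ed) (r : Fin (n+2) → V), IsNBWalk G r →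
      r ⟨n, by omega⟩ = e.val.1 → r ⟨n+1, by omega⟩ = e.val.2 → K' r = f e := by
    intro e r hr h1 h2
    obtain ⟨hw, hwa, hwb⟩ :=
      (exists_nb_last_edge G hq hreg e.val.1 e.val.2 e.property n).choose_spec
    exact eq_of_same_last_edge G hq hreg K' hK r _ hr hw (by rw [h1, hwa]) (by rw [h2, hwb])
  have fR : ∀ e e' : Ed, R e e' → f e = f e' := by
    intro e e' hRee
    obtain ⟨r, hr, h1, h2⟩ := exists_nb_last_edge G hq hreg e.val.1 e.val.2 e.property n
    have hadj : G.Adj (r (Fin.last (n+1))) e'.val.2 := by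
      have : r (Fin.last (n+1)) = r ⟨n+1, by omega⟩ := rfl
      rw [this, h2, ← hRee.1]
      exact e'.property
    have hne : e'.val.2 ≠ r ⟨(n+1) - 1, Nat.sub_lt_succ (n+1) 1⟩ := by
      have : r ⟨(n+1) - 1, Nat.sub_lt_succ (n+1) 1⟩ = r ⟨n, by omega⟩ := rfl
      rw [this, h1]
      exact hRee.2
    obtain ⟨hKeq, hnb⟩ := shift_once G K' hK r hr e'.val.2 hadj hne
    rw [← f_spec e r hr h1 h2, hKeq]
    apply f_spec e' _ hnb
    · show (Fin.snoc r e'.val.2 : Fin (n+3) → V) (Fin.succ ⟨n, by omega⟩) = e'.val.1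
      have hs : (Fin.succ ⟨n, by omega⟩ : Fin (n+3)) = ⟨n+1, by omega⟩ := rfl
      rw [hs, snoc_mk_lt r e'.val.2 (by omega), h2, hRee.1]
    · show (Fin.snoc r e'.val.2 : Fin (n+3) → V) (Fin.succ ⟨n+1, by omega⟩) = e'.val.2
      have hs : (Fin.succ ⟨n+1, by omega⟩ : Fin (n+3)) = ⟨n+2, by omega⟩ := rfl
      rw [hs, snoc_mk_last]
  have fRR : ∀ e e' : Ed, Relation.ReflTransGen R e e' → f e = f e' := by
    intro e e' hree
    induction hree with
    | refl => rfl
    | tail hab hbc ih => exact ih.trans (fR _ _ hbc)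
  have fBack : ∀ e e' : Ed, R e e' → f e' = f e := fun e e' h =>
    fRR e' e (back_reach R q (by omega) hout hin h)
  -- f depends only on target
  have f_target : ∀ (v x x' : V) (hx : G.Adj x v) (hx' : G.Adj x' v),
      f ⟨(x, v), hx⟩ = f ⟨(x', v), hx'⟩ := by
    intro v x x' hx hx'
    rcases eq_or_ne x x' with rfl | hne
    · rfl
    obtain ⟨d, hd, hdx, hdx'⟩ := exists_ne_nbr2 G hq hreg v x x'
    have h1 : f ⟨(x, v), hx⟩ = f ⟨(v, d), hd⟩ := fR _ _ ⟨rfl, hdx⟩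
    have h2 : f ⟨(x', v), hx'⟩ = f ⟨(v, d), hd⟩ := fR _ _ ⟨rfl, hdx'⟩
    rw [h1, h2]
  -- g on vertices
  have hnbr : ∀ v : V, ∃ b, G.Adj b v := by
    intro v
    obtain ⟨b, hb, -⟩ := exists_ne_nbr G hq hreg v v
    exact ⟨b, G.adj_symm hb⟩
  set g : V → ℂ := fun v => f ⟨((hnbr v).choose, v), (hnbr v).choose_spec⟩ with hg
  have g_spec : ∀ (v x : V) (hx : G.Adj x v), g v = f ⟨(x, v), hx⟩ := by
    intro v x hx
    exact f_target v _ x (hnbr v).choose_spec hx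
  have g_adj : ∀ v w : V, G.Adj v w → g v = g w := by
    intro v w hvw
    obtain ⟨x, hvx, hxw⟩ := exists_ne_nbr G hq hreg v w
    have h1 : g v = f ⟨(x, v), G.adj_symm hvx⟩ := g_spec v x (G.adj_symm hvx)
    have h2 : f ⟨(x, v), G.adj_symm hvx⟩ = f ⟨(v, w), hvw⟩ := fR _ _ ⟨rfl, Ne.symm hxw⟩
    have h3 : g w = f ⟨(v, w), hvw⟩ := g_spec w v hvw
    rw [h1, h2, h3]
  have g_reach : ∀ v w : V, G.Reachable v w → g v = g w := by
    intro v w hreach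
    obtain ⟨p⟩ := hreach
    induction p with
    | nil => rfl
    | cons h' p' ih => exact (g_adj _ _ h').trans ih
  haveI : Nonempty V := hconn.nonempty
  set v0 : V := Classical.arbitrary V with hv0
  refine ⟨g v0, ?_⟩
  intro r hr
  have hadj : G.Adj (r ⟨n, by omega⟩) (r ⟨n+1, by omega⟩) :=
    ((isNBWalk_iff G r).mp hr).1 n (by omega)
  have h1 : K' r = f ⟨(r ⟨n, by omega⟩, r ⟨n+1, by omega⟩), hadj⟩ :=
    f_spec _ r hr rfl rfl
  have h2 : g (r ⟨n+1, by omega⟩) = f ⟨(r ⟨n, by omega⟩, r ⟨n+1, by omega⟩), hadj⟩ :=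
    g_spec _ _ hadj
  rw [h1, ← h2, g_reach _ _ (hconn (r ⟨n+1, by omega⟩) v0)]

lemma part1_zero (hconn : G.Connected) (K' : (Fin 1 → V) → ℂ)
    (hK : ∀ p : Fin 2 → V, IsNBWalk G p → gradK K' p = 0) :
    ∃ c : ℂ, ∀ r : Fin 1 → V, IsNBWalk G r → K' r = c := by
  classical
  set g : V → ℂ := fun v => K' (fun _ => v) with hg
  have g_adj : ∀ a b : V, G.Adj a b → g a = g b := by
    intro a b hab
    have h0 := hK (fun i : Fin 2 => if i = 0 then a else b) (nb_pair G hab)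
    unfold gradK at h0
    have h1 : (fun i : Fin 1 => if (i.succ : Fin 2) = 0 then a else b) = fun _ : Fin 1 => b := by
      funext i
      simp [Fin.succ_ne_zero]
    have h2 : (fun i : Fin 1 => if (i.castSucc : Fin 2) = 0 then a else b) = fun _ : Fin 1 => a := by
      funext i
      have : i = 0 := Subsingleton.elim i 0
      subst this
      simp
    rw [h1, h2] at h0
    exact (sub_eq_zero.mp h0).symm
  have g_reach : ∀ v w : V, G.Reachable v w → g v = g w := by
    intro v w hreach
    obtain ⟨p⟩ := hreach
    induction p with
    | nil => rfl
    | cons h' p' ih => exact (g_adj _ _ h').trans ih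
  haveI : Nonempty V := hconn.nonempty
  refine ⟨g (Classical.arbitrary V), ?_⟩
  intro r _
  have : r = fun _ => r 0 := by
    funext i
    congr 1
    exact Subsingleton.elim i 0
  rw [this]
  exact g_reach _ _ (hconn (r 0) _)

lemma part1 {q : ℕ} (hq : 2 ≤ q) (hconn : G.Connected) (hreg : G.IsRegularOfDegree (q + 1))
    (j : ℕ) (K' : (Fin (j+1) → V) → ℂ)
    (hK : ∀ p : Fin (j+2) → V, IsNBWalk G p → gradK K' p = 0) :
    ∃ c : ℂ, ∀ r : Fin (j+1) → V, IsNBWalk G r → K' r = c := by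
  cases j with
  | zero => exact part1_zero G hconn K' hK
  | succ n => exact part1_pos G hq hconn hreg n K' hK

end D
section E
variable [Fintype V] [DecidableEq V] (G : SimpleGraph V) [DecidableRel G.Adj]

lemma nb_of_snoc {j : ℕ} {r : Fin (j+1) → V} {y : V} (h : IsNBWalk G (Fin.snoc r y)) :
    IsNBWalk G r ∧ G.Adj (r (Fin.last j)) y ∧ y ≠ r ⟨j - 1, Nat.sub_lt_succ j 1⟩ := by
  have hr : IsNBWalk G r := by
    have h' := nb_head G h
    have he : (fun i : Fin (j+1) => (Fin.snoc r y : Fin (j+2) → V) i.castSucc) = r := by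
      funext i; simp
    rwa [he] at h'
  have h1 := ((isNBWalk_iff G _).mp h).1
  have h2 := ((isNBWalk_iff G _).mp h).2
  have hadj : G.Adj (r (Fin.last j)) y := by
    have h3 := h1 j (by omega)
    rw [snoc_mk_lt r y (i := j) (by omega), snoc_mk_last] at h3
    have e : (Fin.last j) = (⟨j, by omega⟩ : Fin (j+1)) := rfl
    rw [e]
    exact h3
  refine ⟨hr, hadj, ?_⟩
  cases j with
  | zero =>
    have e : (⟨0 - 1, Nat.sub_lt_succ 0 1⟩ : Fin 1) = Fin.last 0 := Subsingleton.elim _ _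
    rw [e]
    exact hadj.ne'
  | succ k =>
    have h3 := h2 k (by omega)
    have e : (⟨k+2, by omega⟩ : Fin (k+3)) = ⟨(k+1)+1, by omega⟩ := Fin.ext rfl
    rw [e, snoc_mk_last, snoc_mk_lt r y (i := k) (by omega)] at h3
    exact h3

lemma nb_of_cons {j : ℕ} {r : Fin (j+1) → V} {y : V} (h : IsNBWalk G (Fin.cons y r)) :
    IsNBWalk G r ∧ G.Adj y (r 0) ∧ y ≠ r 1 := by
  have hr : IsNBWalk G r := by
    have h' := nb_tail G h
    have he : (fun i : Fin (j+1) => (Fin.cons y r : Fin (j+2) → V) i.succ) = r := by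
      funext i; simp
    rwa [he] at h'
  have h1 := ((isNBWalk_iff G _).mp h).1
  have h2 := ((isNBWalk_iff G _).mp h).2
  have hadj : G.Adj y (r 0) := by
    have h3 := h1 0 (by omega)
    rw [cons_mk_zero r y, cons_mk_succ r y (i := 0) (by omega)] at h3
    have e : (0 : Fin (j+1)) = (⟨0, by omega⟩ : Fin (j+1)) := Fin.ext (by simp)
    rw [e]
    exact h3
  refine ⟨hr, hadj, ?_⟩
  cases j with
  | zero =>
    have e : (1 : Fin 1) = 0 := Subsingleton.elim _ _
    rw [e]
    exact hadj.ne
  | succ k =>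
    have h3 := h2 0 (by omega)
    have e : (⟨0+2, by omega⟩ : Fin (k+3)) = ⟨1+1, by omega⟩ := Fin.ext rfl
    rw [e, cons_mk_zero r y, cons_mk_succ r y (i := 1) (by omega)] at h3
    have e2 : (1 : Fin (k+2)) = ⟨1, by omega⟩ := Fin.ext (by simp [Nat.mod_eq_of_lt])
    rw [e2]
    exact h3.symm

/-- the tail of an NB walk of length j+1 -/
def tailSub {j : ℕ} (P : {p : Fin (j+2) → V // IsNBWalk G p}) :
    {p : Fin (j+1) → V // IsNBWalk G p} :=
  ⟨fun i => P.val i.succ, nb_tail G P.property⟩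

def headSub {j : ℕ} (P : {p : Fin (j+2) → V // IsNBWalk G p}) :
    {p : Fin (j+1) → V // IsNBWalk G p} :=
  ⟨fun i => P.val i.castSucc, nb_head G P.property⟩

noncomputable def gradL (j : ℕ) :
    EuclideanSpace ℂ {p : Fin (j+1) → V // IsNBWalk G p}
      →ₗ[ℂ] EuclideanSpace ℂ {p : Fin (j+2) → V // IsNBWalk G p} where
  toFun F := WithLp.toLp 2 (fun P => F (tailSub G P) - F (headSub G P))
  map_add' F F' := by
    ext P
    show (F (tailSub G P) + F' (tailSub G P)) - (F (headSub G P) + F' (headSub G P)) = _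
    show _ = (F (tailSub G P) - F (headSub G P)) + (F' (tailSub G P) - F' (headSub G P))
    ring
  map_smul' c F := by
    ext P
    show (c * F (tailSub G P)) - (c * F (headSub G P))
      = c * (F (tailSub G P) - F (headSub G P))
    ring

end E
section F
variable [Fintype V] [DecidableEq V] (G : SimpleGraph V) [DecidableRel G.Adj]

lemma cons_decomp {j : ℕ} (P : Fin (j+2) → V) (r : Fin (j+1) → V)
    (h : (fun i : Fin (j+1) => P i.succ) = r) : P = Fin.cons (P 0) r := by
  funext i
  refine Fin.cases ?_ ?_ i
  · simp
  · intro k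
    rw [Fin.cons_succ, ← h]

lemma snoc_decomp {j : ℕ} (P : Fin (j+2) → V) (r : Fin (j+1) → V)
    (h : (fun i : Fin (j+1) => P i.castSucc) = r) : P = Fin.snoc r (P (Fin.last (j+1))) := by
  funext i
  refine Fin.lastCases ?_ ?_ i
  · simp
  · intro k
    rw [Fin.snoc_castSucc, ← h]

lemma nb_cons_of_mem {j : ℕ} (r : Fin (j+1) → V) (hr : IsNBWalk G r) (y : V)
    (hy : y ∈ G.neighborFinset (r 0) \ {r 1}) : IsNBWalk G (Fin.cons y r) := by
  obtain ⟨h1, h2⟩ := Finset.mem_sdiff.mp hy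
  refine nb_cons G hr (G.adj_symm ((G.mem_neighborFinset _ _).mp h1)) ?_
  intro hj1
  have e : (1 : Fin (j+1)) = ⟨1, hj1⟩ := Fin.ext (Nat.mod_eq_of_lt hj1)
  rw [← e]
  simpa using h2

lemma mem_of_nb_cons {j : ℕ} (r : Fin (j+1) → V) (y : V) (h : IsNBWalk G (Fin.cons y r)) :
    y ∈ G.neighborFinset (r 0) \ {r 1} := by
  obtain ⟨-, hadj, hne⟩ := nb_of_cons G h
  exact Finset.mem_sdiff.mpr ⟨(G.mem_neighborFinset _ _).mpr (G.adj_symm hadj), by simpa using hne⟩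

lemma nb_snoc_of_mem {j : ℕ} (r : Fin (j+1) → V) (hr : IsNBWalk G r) (y : V)
    (hy : y ∈ G.neighborFinset (r (Fin.last j)) \ {r ⟨j - 1, Nat.sub_lt_succ j 1⟩}) :
    IsNBWalk G (Fin.snoc r y) := by
  obtain ⟨h1, h2⟩ := Finset.mem_sdiff.mp hy
  exact nb_snoc G hr ((G.mem_neighborFinset _ _).mp h1) (by simpa using h2)

lemma mem_of_nb_snoc {j : ℕ} (r : Fin (j+1) → V) (y : V) (h : IsNBWalk G (Fin.snoc r y)) :
    y ∈ G.neighborFinset (r (Fin.last j)) \ {r ⟨j - 1, Nat.sub_lt_succ j 1⟩} := by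
  obtain ⟨-, hadj, hne⟩ := nb_of_snoc G h
  exact Finset.mem_sdiff.mpr ⟨(G.mem_neighborFinset _ _).mpr hadj, by simpa using hne⟩

lemma adj_eq_gradStar (j : ℕ) (L : EuclideanSpace ℂ {p : Fin (j+2) → V // IsNBWalk G p})
    (r : {p : Fin (j+1) → V // IsNBWalk G p}) :
    (LinearMap.adjoint (gradL G j)) L r
      = gradStarK G (fun p => if h : IsNBWalk G p then L ⟨p, h⟩ else 0) r.val := by
  classical
  have h1 : (LinearMap.adjoint (gradL G j)) L r
      = inner (𝕜 := ℂ) (EuclideanSpace.single r (1:ℂ)) ((LinearMap.adjoint (gradL G j)) L) := by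
    rw [EuclideanSpace.inner_single_left]
    simp
  rw [h1, LinearMap.adjoint_inner_right]
  have h2 : inner (𝕜 := ℂ) ((gradL G j) (EuclideanSpace.single r 1)) L
      = ∑ P : {p : Fin (j+2) → V // IsNBWalk G p},
          (starRingEnd ℂ) (((gradL G j) (EuclideanSpace.single r 1)) P) * L P := by
    rw [PiLp.inner_apply]; simp only [RCLike.inner_apply']
  rw [h2]
  have h3 : ∀ P : {p : Fin (j+2) → V // IsNBWalk G p},
      (starRingEnd ℂ) (((gradL G j) (EuclideanSpace.single r 1)) P) * L P
        = (if tailSub G P = r then L P else 0) - (if headSub G P = r then L P else 0) := by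
    intro P
    have e : ((gradL G j) (EuclideanSpace.single r 1)) P
        = (if tailSub G P = r then (1:ℂ) else 0) - (if headSub G P = r then (1:ℂ) else 0) := by
      show (EuclideanSpace.single r (1:ℂ)) (tailSub G P)
          - (EuclideanSpace.single r (1:ℂ)) (headSub G P) = _
      rw [EuclideanSpace.single_apply, EuclideanSpace.single_apply]
    rw [e]
    rw [map_sub, apply_ite (starRingEnd ℂ), apply_ite (starRingEnd ℂ)]
    simp only [map_one, map_zero]
    rw [sub_mul, ite_mul, ite_mul, one_mul, zero_mul]
  rw [Finset.sum_congr rfl (fun P _ => h3 P), Finset.sum_sub_distrib]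
  have h4 : ∑ P : {p : Fin (j+2) → V // IsNBWalk G p}, (if tailSub G P = r then L P else 0)
      = ∑ P ∈ Finset.univ.filter (fun P : {p : Fin (j+2) → V // IsNBWalk G p} => tailSub G P = r),
          L P := (Finset.sum_filter _ _).symm
  have h5 : ∑ P : {p : Fin (j+2) → V // IsNBWalk G p}, (if headSub G P = r then L P else 0)
      = ∑ P ∈ Finset.univ.filter (fun P : {p : Fin (j+2) → V // IsNBWalk G p} => headSub G P = r),
          L P := (Finset.sum_filter _ _).symm
  rw [h4, h5]
  have hA : ∑ P ∈ Finset.univ.filter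
        (fun P : {p : Fin (j+2) → V // IsNBWalk G p} => tailSub G P = r), L P
      = ∑ y ∈ G.neighborFinset (r.val 0) \ {r.val 1},
          (fun p => if h : IsNBWalk G p then L ⟨p, h⟩ else 0) (Fin.cons y r.val) := by
    refine Finset.sum_bij' (fun P _ => P.val 0)
      (fun y hy => ⟨Fin.cons y r.val, nb_cons_of_mem G r.val r.property y hy⟩)
      ?_ ?_ ?_ ?_ ?_
    · intro P hP
      have ht : (fun i : Fin (j+1) => P.val i.succ) = r.val :=
        congrArg Subtype.val (Finset.mem_filter.mp hP).2
      have hPd : P.val = Fin.cons (P.val 0) r.val := cons_decomp P.val r.val ht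
      have hnb : IsNBWalk G (Fin.cons (P.val 0) r.val) := by rw [← hPd]; exact P.property
      exact mem_of_nb_cons G r.val (P.val 0) hnb
    · intro y hy
      refine Finset.mem_filter.mpr ⟨Finset.mem_univ _, ?_⟩
      apply Subtype.ext
      funext i
      show (Fin.cons y r.val : Fin (j+2) → V) i.succ = r.val i
      simp
    · intro P hP
      have ht : (fun i : Fin (j+1) => P.val i.succ) = r.val :=
        congrArg Subtype.val (Finset.mem_filter.mp hP).2
      have hPd : P.val = Fin.cons (P.val 0) r.val := cons_decomp P.val r.val ht
      exact Subtype.ext hPd.symm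
    · intro y hy
      simp
    · intro P hP
      have ht : (fun i : Fin (j+1) => P.val i.succ) = r.val :=
        congrArg Subtype.val (Finset.mem_filter.mp hP).2
      have hPd : P.val = Fin.cons (P.val 0) r.val := cons_decomp P.val r.val ht
      have hnb : IsNBWalk G (Fin.cons (P.val 0) r.val) := by rw [← hPd]; exact P.property
      show L P = if h : IsNBWalk G (Fin.cons (P.val 0) r.val) then L ⟨Fin.cons (P.val 0) r.val, h⟩ else 0
      rw [dif_pos hnb]
      exact congrArg L (Subtype.ext hPd)
  have hB : ∑ P ∈ Finset.univ.filter
        (fun P : {p : Fin (j+2) → V // IsNBWalk G p} => headSub G P = r), L P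
      = ∑ y ∈ G.neighborFinset (r.val (Fin.last j)) \ {r.val ⟨j - 1, Nat.sub_lt_succ j 1⟩},
          (fun p => if h : IsNBWalk G p then L ⟨p, h⟩ else 0) (Fin.snoc r.val y) := by
    refine Finset.sum_bij' (fun P _ => P.val (Fin.last (j+1)))
      (fun y hy => ⟨Fin.snoc r.val y, nb_snoc_of_mem G r.val r.property y hy⟩)
      ?_ ?_ ?_ ?_ ?_
    · intro P hP
      have ht : (fun i : Fin (j+1) => P.val i.castSucc) = r.val :=
        congrArg Subtype.val (Finset.mem_filter.mp hP).2
      have hPd : P.val = Fin.snoc r.val (P.val (Fin.last (j+1))) := snoc_decomp P.val r.val ht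
      have hnb : IsNBWalk G (Fin.snoc r.val (P.val (Fin.last (j+1)))) := by
        rw [← hPd]; exact P.property
      exact mem_of_nb_snoc G r.val _ hnb
    · intro y hy
      refine Finset.mem_filter.mpr ⟨Finset.mem_univ _, ?_⟩
      apply Subtype.ext
      funext i
      show (Fin.snoc r.val y : Fin (j+2) → V) i.castSucc = r.val i
      simp
    · intro P hP
      have ht : (fun i : Fin (j+1) => P.val i.castSucc) = r.val :=
        congrArg Subtype.val (Finset.mem_filter.mp hP).2
      have hPd : P.val = Fin.snoc r.val (P.val (Fin.last (j+1))) := snoc_decomp P.val r.val ht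
      exact Subtype.ext hPd.symm
    · intro y hy
      simp
    · intro P hP
      have ht : (fun i : Fin (j+1) => P.val i.castSucc) = r.val :=
        congrArg Subtype.val (Finset.mem_filter.mp hP).2
      have hPd : P.val = Fin.snoc r.val (P.val (Fin.last (j+1))) := snoc_decomp P.val r.val ht
      have hnb : IsNBWalk G (Fin.snoc r.val (P.val (Fin.last (j+1)))) := by
        rw [← hPd]; exact P.property
      show L P = if h : IsNBWalk G (Fin.snoc r.val (P.val (Fin.last (j+1))))
        then L ⟨Fin.snoc r.val (P.val (Fin.last (j+1))), h⟩ else 0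
      rw [dif_pos hnb]
      exact congrArg L (Subtype.ext hPd)
  rw [hA, hB]
  rfl

end F
section G
variable [Fintype V] [DecidableEq V] (G : SimpleGraph V) [DecidableRel G.Adj]

lemma gradL_ker_const {q : ℕ} (hq : 2 ≤ q) (hconn : G.Connected)
    (hreg : G.IsRegularOfDegree (q + 1)) (j : ℕ)
    (F : EuclideanSpace ℂ {p : Fin (j+1) → V // IsNBWalk G p})
    (hF : gradL G j F = 0) : ∃ c : ℂ, ∀ r, F r = c := by
  classical
  set K' : (Fin (j+1) → V) → ℂ := fun r => if h : IsNBWalk G r then F ⟨r, h⟩ else 0 with hK'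
  have hK : ∀ p : Fin (j+2) → V, IsNBWalk G p → gradK K' p = 0 := by
    intro p hp
    unfold gradK
    show (if h : IsNBWalk G (fun i => p i.succ) then F ⟨_, h⟩ else 0)
      - (if h : IsNBWalk G (fun i => p i.castSucc) then F ⟨_, h⟩ else 0) = 0
    rw [dif_pos (nb_tail G hp), dif_pos (nb_head G hp)]
    exact congrArg (fun v : EuclideanSpace ℂ {p : Fin (j+2) → V // IsNBWalk G p} => v ⟨p, hp⟩) hF
  obtain ⟨c, hc⟩ := part1 G hq hconn hreg j K' hK
  refine ⟨c, fun r => ?_⟩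
  have h2 := hc r.val r.property
  rw [hK'] at h2
  simp only [dif_pos r.property] at h2
  exact h2
lemma exists_preimage_adjoint (j : ℕ)
    (Kv : EuclideanSpace ℂ {p : Fin (j+1) → V // IsNBWalk G p})
    (h : Kv ∈ (LinearMap.ker (gradL G j))ᗮ) :
    ∃ Lv, LinearMap.adjoint (gradL G j) Lv = Kv := by
  have h1 : LinearMap.ker (gradL G j)
      = (LinearMap.range (LinearMap.adjoint (gradL G j)))ᗮ := by
    ext F
    simp only [LinearMap.mem_ker, Submodule.mem_orthogonal]
    constructor
    · intro h0 u hu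
      obtain ⟨Lv, rfl⟩ := hu
      rw [LinearMap.adjoint_inner_left, h0, inner_zero_right]
    · intro hall
      have h2 := hall ((LinearMap.adjoint (gradL G j)) ((gradL G j) F))
        ⟨(gradL G j) F, rfl⟩
      rw [LinearMap.adjoint_inner_left] at h2
      exact inner_self_eq_zero.mp h2
  rw [h1, Submodule.orthogonal_orthogonal] at h
  exact h

end G

theorem grad_kernel_and_gradStar_range' [Fintype V] [DecidableEq V] (G : SimpleGraph V)
    [DecidableRel G.Adj]
    (q : ℕ) (hq : 2 ≤ q) (hconn : G.Connected)
    (hreg : G.IsRegularOfDegree (q + 1)) (j : ℕ) :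
    (∀ K' : (Fin (j + 1) → V) → ℂ,
      (∀ p : Fin (j + 2) → V, IsNBWalk G p → gradK K' p = 0) ↔
      (∃ c : ℂ, ∀ r : Fin (j + 1) → V, IsNBWalk G r → K' r = c)) ∧
    (∀ K : (Fin (j + 1) → V) → ℂ,
      (∃ L : (Fin (j + 2) → V) → ℂ,
        ∀ r : Fin (j + 1) → V, IsNBWalk G r → gradStarK G L r = K r) ↔
      ∑ r ∈ univ.filter (fun r : Fin (j + 1) → V => IsNBWalk G r), K r = 0) := by
  classical
  constructor
  · intro K'
    constructor
    · intro hK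
      exact part1 G hq hconn hreg j K' hK
    · rintro ⟨c, hc⟩ p hp
      unfold gradK
      rw [hc _ (nb_tail G hp), hc _ (nb_head G hp), sub_self]
  · intro K
    constructor
    · rintro ⟨L, hL⟩
      set Lv : EuclideanSpace ℂ {p : Fin (j+2) → V // IsNBWalk G p} :=
        WithLp.toLp 2 (fun P : {p : Fin (j+2) → V // IsNBWalk G p} => L P.val) with hLvdef
      set L' : (Fin (j+2) → V) → ℂ :=
        fun p => if h : IsNBWalk G p then Lv ⟨p, h⟩ else 0 with hL'
      have hsame : ∀ r : Fin (j+1) → V, IsNBWalk G r → gradStarK G L r = gradStarK G L' r := by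
        intro r hr
        unfold gradStarK
        congr 1
        · apply Finset.sum_congr rfl
          intro y hy
          simp only [hL']
          rw [dif_pos (nb_cons_of_mem G r hr y hy)]
        · apply Finset.sum_congr rfl
          intro y hy
          simp only [hL']
          rw [dif_pos (nb_snoc_of_mem G r hr y hy)]
      have hsum : ∑ r ∈ univ.filter (fun r : Fin (j+1) → V => IsNBWalk G r), K r
          = ∑ r ∈ univ.filter (fun r : Fin (j+1) → V => IsNBWalk G r), gradStarK G L' r := by
        apply Finset.sum_congr rfl
        intro r hr
        have hrnb : IsNBWalk G r := (Finset.mem_filter.mp hr).2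
        rw [← hL r hrnb, hsame r hrnb]
      rw [hsum]
      have hsub : ∑ r ∈ univ.filter (fun r : Fin (j+1) → V => IsNBWalk G r), gradStarK G L' r
          = ∑ r : {p : Fin (j+1) → V // IsNBWalk G p}, gradStarK G L' r.val :=
        Finset.sum_subtype _ (by intro x; simp) _
      rw [hsub]
      have hadjpt : ∀ r : {p : Fin (j+1) → V // IsNBWalk G p}, gradStarK G L' r.val
          = (LinearMap.adjoint (gradL G j)) Lv r :=
        fun r => (adj_eq_gradStar G j Lv r).symm
      rw [Finset.sum_congr rfl (fun r _ => hadjpt r)]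
      set ones : EuclideanSpace ℂ {p : Fin (j+1) → V // IsNBWalk G p} := WithLp.toLp 2 (fun _ => 1) with hones
      have hinner : ∑ r : {p : Fin (j+1) → V // IsNBWalk G p},
            (LinearMap.adjoint (gradL G j)) Lv r
          = inner (𝕜 := ℂ) ones ((LinearMap.adjoint (gradL G j)) Lv) := by
        rw [PiLp.inner_apply]
        simp only [RCLike.inner_apply', hones, WithLp.ofLp_toLp, map_one, one_mul]
      rw [hinner, LinearMap.adjoint_inner_right]
      have hzero : (gradL G j) ones = 0 := by
        ext P
        show ones (tailSub G P) - ones (headSub G P) = (0 : EuclideanSpace ℂ _) P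
        show (1 : ℂ) - 1 = (0 : ℂ)
        simp
      rw [hzero, inner_zero_left]
    · intro hsum
      set Kv : EuclideanSpace ℂ {p : Fin (j+1) → V // IsNBWalk G p} :=
        WithLp.toLp 2 (fun r : {p : Fin (j+1) → V // IsNBWalk G p} => K r.val) with hKvdef
      have hKvmem : Kv ∈ (LinearMap.ker (gradL G j))ᗮ := by
        rw [Submodule.mem_orthogonal]
        intro F hF
        obtain ⟨c, hc⟩ := gradL_ker_const G hq hconn hreg j F (LinearMap.mem_ker.mp hF)
        rw [PiLp.inner_apply]
        simp only [RCLike.inner_apply']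
        have hpt : ∀ r : {p : Fin (j+1) → V // IsNBWalk G p},
            (starRingEnd ℂ) (F r) * Kv r = (starRingEnd ℂ) c * K r.val := by
          intro r
          rw [hc r]
        rw [Finset.sum_congr rfl (fun r _ => hpt r), ← Finset.mul_sum]
        have hs : ∑ r : {p : Fin (j+1) → V // IsNBWalk G p}, K r.val
            = ∑ r ∈ univ.filter (fun r : Fin (j+1) → V => IsNBWalk G r), K r :=
          (Finset.sum_subtype _ (by intro x; simp) _).symm
        rw [hs, hsum, mul_zero]
      obtain ⟨Lv, hLv⟩ := exists_preimage_adjoint G j Kv hKvmem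
      refine ⟨fun p => if h : IsNBWalk G p then Lv ⟨p, h⟩ else 0, ?_⟩
      intro r hr
      rw [← adj_eq_gradStar G j Lv ⟨r, hr⟩, hLv]


/-- On a finite connected (q+1)-regular graph with q ≥ 2, the kernel of ∇ consists
exactly of the constants, and the range of ∇* consists exactly of the mean-zero
functions on non-backtracking paths. -/
theorem grad_kernel_and_gradStar_range [Fintype V] [DecidableEq V] (G : SimpleGraph V)
    [DecidableRel G.Adj]
    (q : ℕ) (hq : 2 ≤ q) (hconn : G.Connected)
    (hreg : G.IsRegularOfDegree (q + 1)) (j : ℕ) :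
    (∀ K' : (Fin (j + 1) → V) → ℂ,
      (∀ p : Fin (j + 2) → V, IsNBWalk G p → gradK K' p = 0) ↔
      (∃ c : ℂ, ∀ r : Fin (j + 1) → V, IsNBWalk G r → K' r = c)) ∧
    (∀ K : (Fin (j + 1) → V) → ℂ,
      (∃ L : (Fin (j + 2) → V) → ℂ,
        ∀ r : Fin (j + 1) → V, IsNBWalk G r → gradStarK G L r = K r) ↔
      ∑ r ∈ univ.filter (fun r : Fin (j + 1) → V => IsNBWalk G r), K r = 0) := by
  exact grad_kernel_and_gradStar_range' G q hq hconn hreg j
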